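/- In the monoid PT_n of partial transformations of {1,...,n}, the subsemigroup generated by all idempotents is exactly the set of all partial transformations that are not non-identity permutations; that is, ⟨E(PT_n)⟩ = (PT_n ∖ S_n) ∪ {id}. -/

import Mathlib

attribute [local instance] Classical.propDecidable

/-- The monoid of partial transformations of `{1,…,n}`, written as partial maps
on `Fin n`, composed left-to-right: `x(αβ) = (xα)β`. -/
def PT (n : ℕ) : Type := Fin n → Option (Fin n)

instance (n : ℕ) : Mul (PT n) := ⟨fun α β x => (α x).bind β⟩
instance (n : ℕ) : One (PT n) := ⟨fun x => some x⟩

instance (n : ℕ) : Monoid (PT n) where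
  mul_assoc a b c := funext fun x => by
    show ((a x).bind b).bind c = (a x).bind fun y => (b y).bind c
    cases a x <;> rfl
  one_mul a := funext fun _ => rfl
  mul_one a := funext fun x => by
    show (a x).bind some = a x
    cases a x <;> rfl

namespace PT
variable {n : ℕ}

/-- The domain of a partial transformation. -/
def dom (α : PT n) : Set (Fin n) := {x | α x ≠ none}

/-- The image of a partial transformation. -/
def im (α : PT n) : Set (Fin n) := {y | ∃ x, α x = some y}

/-- The kernel: the partial equivalence `{(x,y) : x,y ∈ dom α, xα = yα}`. -/
def ker (α : PT n) : Fin n → Fin n → Prop :=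
  fun x y => x ∈ α.dom ∧ y ∈ α.dom ∧ α x = α y

/-- The principal left ideal `PT_n · α` (the monoid contains `1`, so it contains `α`). -/
def leftIdeal (α : PT n) : Set (PT n) := Set.range fun γ => γ * α

/-- The principal right ideal `α · PT_n`. -/
def rightIdeal (α : PT n) : Set (PT n) := Set.range fun γ => α * γ

end PT

namespace EPProof
variable {n : ℕ}

lemma mul_apply (α β : PT n) (x : Fin n) : (α * β) x = (α x).bind β := rfl

/-- `α` is a (total) permutation. -/
def IsPerm (α : PT n) : Prop := ∃ σ : Equiv.Perm (Fin n), ∀ x, α x = some (σ x)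

/-- The set of idempotents. -/
def ES (n : ℕ) : Set (PT n) := {e : PT n | e * e = e}

lemma one_mem_ES : (1 : PT n) ∈ ES n := mul_one 1

/-- Update a partial map at one point. -/
noncomputable def upd (α : PT n) (a : Fin n) (w : Option (Fin n)) : PT n :=
  fun x => if x = a then w else α x

lemma upd_same (α : PT n) (a : Fin n) (w : Option (Fin n)) : upd α a w a = w := if_pos rfl
lemma upd_ne (α : PT n) {x a : Fin n} (w : Option (Fin n)) (h : x ≠ a) :
    upd α a w x = α x := if_neg h

/-- The idempotent which is the identity off `a` and undefined at `a`. -/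
noncomputable def eps (a : Fin n) : PT n := fun x => if x = a then none else some x

/-- The idempotent sending `a ↦ b` and fixing everything else. -/
noncomputable def tm (a b : Fin n) : PT n := fun x => if x = a then some b else some x

lemma eps_mem (a : Fin n) : eps a ∈ ES n := by
  funext x
  show (eps a x).bind (eps a) = eps a x
  by_cases h : x = a
  · simp [eps, h, Option.bind]
  · simp [eps, h, Option.bind]

lemma tm_mem (a b : Fin n) : tm a b ∈ ES n := by
  funext x
  show (tm a b x).bind (tm a b) = tm a b x
  by_cases h : x = a <;> simp [tm, h, Option.bind]

/-- Left peel: if `α x = α y`, `x ≠ y`, then `α = t_{x,y} * (α updated arbitrarily at x)`. -/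
lemma peel_tmL {α : PT n} {x y : Fin n} (hxy : x ≠ y) (h : α x = α y) (w : Option (Fin n)) :
    α = tm x y * upd α x w := by
  funext v
  show α v = (tm x y v).bind (upd α x w)
  by_cases hv : v = x
  · subst hv
    have : tm v y v = some y := if_pos rfl
    rw [this]
    show α v = upd α v w y
    rw [upd_ne _ _ (Ne.symm hxy)]
    exact h
  · have : tm x y v = some v := if_neg hv
    rw [this]
    show α v = upd α x w v
    rw [upd_ne _ _ hv]

/-- Right peel: if `b` is not in the image and `α b = some d`, then
`α = α[b := b] * t_{b,d}`. -/
lemma peel_tmR {α : PT n} {b d : Fin n} (him : ∀ v, α v ≠ some b) (hb : α b = some d) :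
    α = upd α b (some b) * tm b d := by
  funext v
  show α v = (upd α b (some b) v).bind (tm b d)
  by_cases hv : v = b
  · subst hv
    rw [upd_same]
    show α v = tm v d v
    rw [hb]
    exact (if_pos rfl).symm
  · rw [upd_ne _ _ hv]
    cases hα : α v with
    | none => rfl
    | some u =>
      have hub : u ≠ b := fun h => him v (h ▸ hα)
      show some u = tm b d u
      exact (if_neg hub).symm

/-- Parking peel: if `a` is not in the image and `α x = some c`, then
`α = α[x := a] * t_{a,c}`. -/
lemma peel_park {α : PT n} {x a c : Fin n} (him : ∀ v, α v ≠ some a) (hx : α x = some c) :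
    α = upd α x (some a) * tm a c := by
  funext v
  show α v = (upd α x (some a) v).bind (tm a c)
  by_cases hv : v = x
  · subst hv
    rw [upd_same]
    show α v = tm a c a
    rw [hx]
    exact (if_pos rfl).symm
  · rw [upd_ne _ _ hv]
    cases hα : α v with
    | none => rfl
    | some u =>
      have hua : u ≠ a := fun h => him v (h ▸ hα)
      show some u = tm a c u
      exact (if_neg hua).symm

/-- Epsilon peel: if `a` is not in the image and `α a = none`, then
`α = α[a := a] * ε_a`. -/
lemma peel_eps {α : PT n} {a : Fin n} (him : ∀ v, α v ≠ some a) (ha : α a = none) :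
    α = upd α a (some a) * eps a := by
  funext v
  show α v = (upd α a (some a) v).bind (eps a)
  by_cases hv : v = a
  · subst hv
    rw [upd_same, ha]
    show (none : Option (Fin n)) = eps v v
    exact (if_pos rfl).symm
  · rw [upd_ne _ _ hv]
    cases hα : α v with
    | none => rfl
    | some u =>
      have hua : u ≠ a := fun h => him v (h ▸ hα)
      show some u = eps a u
      exact (if_neg hua).symm

/-- The number of displaced points of `α`. -/
noncomputable def mm (α : PT n) : ℕ := (Finset.univ.filter fun x => α x ≠ some x).card

lemma mm_lt {α : PT n} {x : Fin n} (hx : α x ≠ some x) : mm (upd α x (some x)) < mm α := by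
  apply Finset.card_lt_card
  constructor
  · intro v hv
    simp only [Finset.mem_filter, Finset.mem_univ, true_and] at hv ⊢
    by_cases hvx : v = x
    · subst hvx
      rw [upd_same] at hv
      exact absurd rfl hv
    · rwa [upd_ne _ _ hvx] at hv
  · intro hsub
    have hx' : x ∈ Finset.univ.filter fun v => α v ≠ some v := by
      simp only [Finset.mem_filter, Finset.mem_univ, true_and]
      exact hx
    have := hsub hx'
    simp only [Finset.mem_filter, Finset.mem_univ, true_and, upd_same] at this
    exact this rfl

lemma mm_park {α : PT n} {x a : Fin n} (hx : α x ≠ some x) (hax : a ≠ x) :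
    mm (upd α x (some a)) = mm α := by
  unfold mm
  congr 1
  ext v
  simp only [Finset.mem_filter, Finset.mem_univ, true_and]
  by_cases hvx : v = x
  · subst hvx
    rw [upd_same]
    constructor
    · intro _; exact hx
    · intro _ h
      exact hax (Option.some_injective _ h)
  · rw [upd_ne _ _ hvx]

/-- Key lemma C: an injective partial map defined exactly off one point `a`
is a product of idempotents. -/
lemma lemC : ∀ (N : ℕ) (α : PT n) (a : Fin n),
    2 * mm α + (if ∃ w, α w = some a then 0 else 1) ≤ N →
    (∀ x, α x = none ↔ x = a) →
    (∀ x y c, α x = some c → α y = some c → x = y) →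
    α ∈ Subsemigroup.closure (ES n) := by
  intro N
  induction N with
  | zero =>
    intro α a hN hdom _
    exfalso
    have ha : α a = none := (hdom a).mpr rfl
    have hmem : a ∈ Finset.univ.filter fun x => α x ≠ some x := by
      simp only [Finset.mem_filter, Finset.mem_univ, true_and, ha]
      exact fun h => (by cases h)
    have h1 : 1 ≤ mm α := Finset.card_pos.mpr ⟨a, hmem⟩
    omega
  | succ N ih =>
    intro α a hN hdom hinj
    have ha : α a = none := (hdom a).mpr rfl
    by_cases hfix : ∀ x, x ≠ a → α x = some x
    · have : α = eps a := by
        funext x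
        by_cases hx : x = a
        · subst hx
          rw [ha]
          exact (if_pos rfl).symm
        · rw [hfix x hx]
          exact (if_neg hx).symm
      rw [this]
      exact Subsemigroup.subset_closure (eps_mem a)
    · push_neg at hfix
      obtain ⟨x, hxa, hxfix⟩ := hfix
      obtain ⟨c, hc⟩ : ∃ c, α x = some c := by
        cases h : α x with
        | none => exact absurd ((hdom x).mp h) hxa
        | some c => exact ⟨c, rfl⟩
      by_cases hbim : ∃ b, b ≠ a ∧ ∀ v, α v ≠ some b
      · -- there is a point `b` in the domain missing from the image: right t-peel
        obtain ⟨b, hba, hbim⟩ := hbim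
        obtain ⟨d, hd⟩ : ∃ d, α b = some d := by
          cases h : α b with
          | none => exact absurd ((hdom b).mp h) hba
          | some d => exact ⟨d, rfl⟩
        have hdb : d ≠ b := fun h => hbim b (h ▸ hd)
        have hstep : α = upd α b (some b) * tm b d := peel_tmR hbim hd
        have hβdom : ∀ z, upd α b (some b) z = none ↔ z = a := by
          intro z
          by_cases hz : z = b
          · subst hz
            rw [upd_same]
            constructor
            · intro h; exact (by cases h)
            · intro h; exact absurd h hba
          · rw [upd_ne _ _ hz]; exact hdom z
        have hβinj : ∀ u v e, upd α b (some b) u = some e → upd α b (some b) v = some e →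
            u = v := by
          intro u v e hu hv
          by_cases hub : u = b <;> by_cases hvb : v = b
          · rw [hub, hvb]
          · subst hub
            rw [upd_same] at hu
            rw [upd_ne _ _ hvb] at hv
            have : e = u := (Option.some_injective _ hu).symm
            subst this
            exact absurd hv (hbim v)
          · subst hvb
            rw [upd_same] at hv
            rw [upd_ne _ _ hub] at hu
            have : e = v := (Option.some_injective _ hv).symm
            subst this
            exact absurd hu (hbim u)
          · rw [upd_ne _ _ hub] at hu
            rw [upd_ne _ _ hvb] at hv
            exact hinj u v e hu hv
        have hαb : α b ≠ some b := by
          rw [hd]; intro h; exact hdb (Option.some_injective _ h)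
        have hm : mm (upd α b (some b)) < mm α := mm_lt hαb
        have hmeas : 2 * mm (upd α b (some b)) +
            (if ∃ w, upd α b (some b) w = some a then 0 else 1) ≤ N := by
          have h1 : (if ∃ w, upd α b (some b) w = some a then 0 else 1) ≤ 1 := by
            split <;> omega
          omega
        rw [hstep]
        exact Subsemigroup.mul_mem _ (ih _ a hmeas hβdom hβinj)
          (Subsemigroup.subset_closure (tm_mem b d))
      · -- every point `≠ a` is in the image; then `a` is not, and we park through `a`
        push_neg at hbim
        have hima : ∀ v, α v ≠ some a := by
          intro w hw
          have hall : ∀ b : Fin n, ∃ v, α v = some b := by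
            intro b
            by_cases hb : b = a
            · exact ⟨w, hb ▸ hw⟩
            · exact hbim b hb
          choose f hf using hall
          have hfinj : Function.Injective f := by
            intro u v h
            have h1 := hf u
            rw [h, hf v] at h1
            exact (Option.some_injective _ h1).symm
          have hfsurj : Function.Surjective f := Finite.injective_iff_surjective.mp hfinj
          obtain ⟨b, hb⟩ := hfsurj a
          have := hf b
          rw [hb, ha] at this
          exact (by cases this)
        have hcx : c ≠ x := fun h => hxfix (h ▸ hc)
        have hca : c ≠ a := fun h => hima x (h ▸ hc)
        have hstep : α = upd α x (some a) * tm a c := peel_park hima hc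
        have hβdom : ∀ z, upd α x (some a) z = none ↔ z = a := by
          intro z
          by_cases hz : z = x
          · subst hz
            rw [upd_same]
            constructor
            · intro h; exact (by cases h)
            · intro h; exact absurd h hxa
          · rw [upd_ne _ _ hz]; exact hdom z
        have hβinj : ∀ u v e, upd α x (some a) u = some e → upd α x (some a) v = some e →
            u = v := by
          intro u v e hu hv
          by_cases hux : u = x <;> by_cases hvx : v = x
          · rw [hux, hvx]
          · subst hux
            rw [upd_same] at hu
            rw [upd_ne _ _ hvx] at hv
            have : e = a := (Option.some_injective _ hu).symm
            subst this
            exact absurd hv (hima v)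
          · subst hvx
            rw [upd_same] at hv
            rw [upd_ne _ _ hux] at hu
            have : e = a := (Option.some_injective _ hv).symm
            subst this
            exact absurd hu (hima u)
          · rw [upd_ne _ _ hux] at hu
            rw [upd_ne _ _ hvx] at hv
            exact hinj u v e hu hv
        have hm : mm (upd α x (some a)) = mm α := mm_park hxfix (Ne.symm hxa)
        have hflag : (if ∃ w, α w = some a then (0:ℕ) else 1) = 1 :=
          if_neg (by rintro ⟨w, hw⟩; exact hima w hw)
        have hflagβ : (if ∃ w, upd α x (some a) w = some a then (0:ℕ) else 1) = 0 :=
          if_pos ⟨x, upd_same α x (some a)⟩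
        have hmeas : 2 * mm (upd α x (some a)) +
            (if ∃ w, upd α x (some a) w = some a then 0 else 1) ≤ N := by
          rw [hflagβ, hm]
          rw [hflag] at hN
          omega
        rw [hstep]
        exact Subsemigroup.mul_mem _ (ih _ a hmeas hβdom hβinj)
          (Subsemigroup.subset_closure (tm_mem a c))

/-- Main lemma M: every non-permutation is a product of idempotents. -/
lemma lemM : ∀ (N : ℕ) (α : PT n), mm α ≤ N → ¬ IsPerm α →
    α ∈ Subsemigroup.closure (ES n) := by
  intro N
  induction N with
  | zero =>
    intro α hN hP
    exfalso
    apply hP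
    refine ⟨Equiv.refl _, fun x => ?_⟩
    by_contra h
    have : x ∈ Finset.univ.filter fun v => α v ≠ some v := by
      simp only [Finset.mem_filter, Finset.mem_univ, true_and]
      exact fun h2 => h (by rw [h2]; rfl)
    have := Finset.card_pos.mpr ⟨x, this⟩
    unfold mm at hN
    omega
  | succ N ih =>
    intro α hN hP
    by_cases hni : ∃ a b c, a ≠ b ∧ α a = some c ∧ α b = some c
    · -- non-injective case
      obtain ⟨a, b, c, hab, haα, hbα⟩ := hni
      obtain ⟨x, y, hxy, hx, hy, hcx⟩ :
          ∃ x y, x ≠ y ∧ α x = some c ∧ α y = some c ∧ c ≠ x := by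
        by_cases hca : c = a
        · exact ⟨b, a, hab.symm, hbα, haα, fun h => hab ((hca.symm.trans h) ▸ rfl)⟩
        · exact ⟨a, b, hab, haα, hbα, hca⟩
      have heq : α x = α y := hx.trans hy.symm
      by_cases hβ : IsPerm (upd α x (some x))
      · -- the residue would be a permutation: go through lemma C with domain `univ \ {x}`
        obtain ⟨σ, hσ⟩ := hβ
        have hstep : α = tm x y * upd α x none := peel_tmL hxy heq none
        have hδdom : ∀ z, upd α x none z = none ↔ z = x := by
          intro z
          by_cases hz : z = x
          · subst hz; rw [upd_same]; simp
          · rw [upd_ne _ _ hz]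
            have h1 := hσ z
            rw [upd_ne _ _ hz] at h1
            rw [h1]
            simp [hz]
        have hδinj : ∀ u v e, upd α x none u = some e → upd α x none v = some e → u = v := by
          intro u v e hu hv
          have hux : u ≠ x := by
            intro h; subst h; rw [upd_same] at hu; exact (by cases hu)
          have hvx : v ≠ x := by
            intro h; subst h; rw [upd_same] at hv; exact (by cases hv)
          rw [upd_ne _ _ hux] at hu
          rw [upd_ne _ _ hvx] at hv
          have h1 := hσ u; rw [upd_ne _ _ hux] at h1
          have h2 := hσ v; rw [upd_ne _ _ hvx] at h2
          rw [h1] at hu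
          rw [h2] at hv
          have : σ u = σ v := by
            have := hu.trans hv.symm
            exact Option.some_injective _ this
          exact σ.injective this
        have hδ : upd α x none ∈ Subsemigroup.closure (ES n) :=
          lemC _ _ x (le_refl _) hδdom hδinj
        rw [hstep]
        exact Subsemigroup.mul_mem _ (Subsemigroup.subset_closure (tm_mem x y)) hδ
      · have hstep : α = tm x y * upd α x (some x) := peel_tmL hxy heq (some x)
        have hαx : α x ≠ some x := by
          rw [hx]; intro h; exact hcx (Option.some_injective _ h)
        have hm : mm (upd α x (some x)) < mm α := mm_lt hαx
        rw [hstep]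
        exact Subsemigroup.mul_mem _ (Subsemigroup.subset_closure (tm_mem x y))
          (ih _ (by omega) hβ)
    · -- injective case
      have hinj : ∀ u v e, α u = some e → α v = some e → u = v := by
        intro u v e hu hv
        by_contra huv
        exact hni ⟨u, v, e, huv, hu, hv⟩
      obtain ⟨a, ha⟩ : ∃ a, α a = none := by
        by_contra h
        push_neg at h
        apply hP
        have hall : ∀ z : Fin n, ∃ w, α z = some w := by
          intro z
          cases hz : α z with
          | none => exact absurd hz (h z)
          | some w => exact ⟨w, rfl⟩
        choose f hf using hall
        have hfinj : Function.Injective f := by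
          intro u v huv
          exact hinj u v (f u) (hf u) (huv ▸ hf v)
        exact ⟨Equiv.ofBijective f (Finite.injective_iff_bijective.mp hfinj),
          fun z => hf z⟩
      by_cases hdom : ∀ z, α z = none ↔ z = a
      · exact lemC _ α a (le_refl _) hdom hinj
      · obtain ⟨a', ha'n, ha'a⟩ : ∃ a', α a' = none ∧ a' ≠ a := by
          by_contra h2
          push_neg at h2
          exact hdom fun z => ⟨h2 z, fun hz => hz ▸ ha⟩
        by_cases hb : ∃ b d, α b = some d ∧ ∀ v, α v ≠ some b
        · obtain ⟨b, d, hbd, hbim⟩ := hb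
          have hdb : d ≠ b := fun h => hbim b (h ▸ hbd)
          have hstep : α = upd α b (some b) * tm b d := peel_tmR hbim hbd
          have hba : a ≠ b := by
            intro h
            rw [← h, ha] at hbd
            exact (by cases hbd)
          have hβP : ¬ IsPerm (upd α b (some b)) := by
            rintro ⟨σ, hσ⟩
            have := hσ a
            rw [upd_ne _ _ hba, ha] at this
            exact (by cases this)
          have hαb : α b ≠ some b := by
            rw [hbd]; intro h; exact hdb (Option.some_injective _ h)
          have hm : mm (upd α b (some b)) < mm α := mm_lt hαb
          rw [hstep]
          exact Subsemigroup.mul_mem _ (ih _ (by omega) hβP)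
            (Subsemigroup.subset_closure (tm_mem b d))
        · push_neg at hb
          have hima : ∀ v, α v ≠ some a := by
            intro w hw
            classical
            set D := Finset.univ.filter fun z => α z ≠ none with hD
            set I := Finset.univ.filter (fun z => ∃ v, α v = some z) with hI
            have hDI : D ⊆ I := by
              intro z hz
              simp only [hD, Finset.mem_filter, Finset.mem_univ, true_and] at hz
              simp only [hI, Finset.mem_filter, Finset.mem_univ, true_and]
              cases hzz : α z with
              | none => exact absurd hzz hz
              | some d => exact hb z d hzz
            have hID : I.card ≤ D.card := by
              have : ∀ z ∈ I, ∃ v ∈ D, α v = some z := by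
                intro z hz
                simp only [hI, Finset.mem_filter, Finset.mem_univ, true_and] at hz
                obtain ⟨v, hv⟩ := hz
                refine ⟨v, ?_, hv⟩
                simp only [hD, Finset.mem_filter, Finset.mem_univ, true_and]
                rw [hv]
                exact fun h => (by cases h)
              have htot : ∀ z : Fin n, ∃ v, z ∈ I → v ∈ D ∧ α v = some z := by
                intro z
                by_cases hz : z ∈ I
                · obtain ⟨v, hv1, hv2⟩ := this z hz
                  exact ⟨v, fun _ => ⟨hv1, hv2⟩⟩
                · exact ⟨z, fun h => absurd h hz⟩
              choose g hg using htot
              exact Finset.card_le_card_of_injOn g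
                (fun z hz => (hg z hz).1)
                (by
                  intro z1 h1 z2 h2 he
                  have e1 := (hg z1 h1).2
                  have e2 := (hg z2 h2).2
                  rw [he, e2] at e1
                  exact Option.some_injective _ e1.symm)
            have hDeqI : D = I := Finset.eq_of_subset_of_card_le hDI hID
            have haD : a ∉ D := by
              simp only [hD, Finset.mem_filter, Finset.mem_univ, true_and, ha]
              exact fun h => h rfl
            have haI : a ∈ I := by
              simp only [hI, Finset.mem_filter, Finset.mem_univ, true_and]
              exact ⟨w, hw⟩
            rw [hDeqI] at haD
            exact haD haI
          have hstep : α = upd α a (some a) * eps a := peel_eps hima ha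
          have hβP : ¬ IsPerm (upd α a (some a)) := by
            rintro ⟨σ, hσ⟩
            have := hσ a'
            rw [upd_ne _ _ ha'a, ha'n] at this
            exact (by cases this)
          have hαa : α a ≠ some a := by rw [ha]; exact fun h => (by cases h)
          have hm : mm (upd α a (some a)) < mm α := mm_lt hαa
          rw [hstep]
          exact Subsemigroup.mul_mem _ (ih _ (by omega) hβP)
            (Subsemigroup.subset_closure (eps_mem a))

/-- If a product is a permutation, the left factor is a permutation. -/
lemma left_perm {α β : PT n} (h : IsPerm (α * β)) : IsPerm α ∧ IsPerm β := by
  obtain ⟨τ, hτ⟩ := h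
  have hall : ∀ x, ∃ y, α x = some y := by
    intro x
    cases hx : α x with
    | none =>
      have := hτ x
      rw [mul_apply, hx] at this
      exact (by cases this)
    | some y => exact ⟨y, rfl⟩
  choose f hf using hall
  have hβf : ∀ x, β (f x) = some (τ x) := by
    intro x
    have := hτ x
    rw [mul_apply, hf x] at this
    exact this
  have hfinj : Function.Injective f := by
    intro u v huv
    have h1 := hβf u
    rw [huv, hβf v] at h1
    exact (τ.injective (Option.some_injective _ h1)).symm
  have hbij := Finite.injective_iff_bijective.mp hfinj
  let σ := Equiv.ofBijective f hbij
  constructor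
  · exact ⟨σ, fun x => hf x⟩
  · refine ⟨σ.symm.trans τ, fun y => ?_⟩
    have : f (σ.symm y) = y := by
      have := σ.apply_symm_apply y
      exact this
    calc β y = β (f (σ.symm y)) := by rw [this]
    _ = some (τ (σ.symm y)) := hβf (σ.symm y)
    _ = some ((σ.symm.trans τ) y) := rfl

/-- An idempotent permutation is the identity. -/
lemma idem_perm_eq_one {e : PT n} (he : e * e = e) (hp : IsPerm e) : e = 1 := by
  obtain ⟨σ, hσ⟩ := hp
  have hfix : ∀ x, σ x = x := by
    intro x
    have h1 : (e * e) x = e x := by rw [he]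
    rw [mul_apply, hσ x] at h1
    have h2 : e (σ x) = some (σ x) := h1
    rw [hσ (σ x)] at h2
    have := Option.some_injective _ h2
    exact σ.injective this
  funext x
  rw [hσ x, hfix x]
  rfl

end EPProof

/-- Evseev–Podran: the subsemigroup of `PT_n` generated by the idempotents consists
exactly of the partial transformations that are not non-identity permutations. -/
theorem stmt_9 (n : ℕ) :
    ((Subsemigroup.closure {e : PT n | e * e = e} : Subsemigroup (PT n)) : Set (PT n)) =
      {α : PT n | ¬ ∃ σ : Equiv.Perm (Fin n), ∀ x, α x = some (σ x)} ∪ {1} := by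
  apply Set.Subset.antisymm
  · -- closure ⊆ RHS: the RHS is a subsemigroup containing the idempotents
    let T : Subsemigroup (PT n) :=
      { carrier := {α : PT n | ¬ ∃ σ : Equiv.Perm (Fin n), ∀ x, α x = some (σ x)} ∪ {1}
        mul_mem' := by
          rintro α β hα hβ
          by_cases h : EPProof.IsPerm (α * β)
          · obtain ⟨hαp, hβp⟩ := EPProof.left_perm h
            have hα1 : α = 1 := by
              rcases hα with hα | hα
              · exact absurd hαp hα
              · exact hα
            have hβ1 : β = 1 := by
              rcases hβ with hβ | hβ
              · exact absurd hβp hβ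
              · exact hβ
            right
            rw [hα1, hβ1, one_mul]
            rfl
          · left
            exact h }
    have hsub : {e : PT n | e * e = e} ⊆ (T : Set (PT n)) := by
      intro e he
      by_cases hp : EPProof.IsPerm e
      · right
        exact EPProof.idem_perm_eq_one he hp
      · left
        exact hp
    exact fun α hα => Subsemigroup.closure_le.mpr hsub hα
  · rintro α (hα | hα)
    · exact EPProof.lemM (EPProof.mm α) α (le_refl _) hα
    · have : α = 1 := hα
      rw [this]
      exact Subsemigroup.subset_closure EPProof.one_mem_ES
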